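/- Let n ≥ 1, let S = {0,1}^n (the set of functions from Fin n to {0,1}), let Δ be the collection of all subsets of S of even cardinality, and for each i let A_i = {x ∈ S : x(i) = 1}. Then every subfamily of {A_1, …, A_n} with strictly fewer than n elements is compatible in Δ: the Boolean subalgebra of subsets of S generated by such a subfamily is contained in Δ. -/
import Mathlib


open scoped symmDiff

/-- An enriched quantum logic (EQL) on a (nonempty) set `S` (here: the type `α`):
a collection `Δ` of subsets containing the whole set and closed under symmetric
difference. -/
def IsEQL {α : Type*} (Δ : Set (Set α)) : Prop :=
  Set.univ ∈ Δ ∧ ∀ A ∈ Δ, ∀ B ∈ Δ, A ∆ B ∈ Δ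

/-- `B` is a Boolean subalgebra of the collection `Δ`: a subcollection of `Δ`
containing the whole set and closed under complements, binary unions and
binary intersections. -/
def IsBoolSub {α : Type*} (Δ B : Set (Set α)) : Prop :=
  B ⊆ Δ ∧ Set.univ ∈ B ∧ (∀ A ∈ B, Aᶜ ∈ B) ∧
    (∀ A ∈ B, ∀ C ∈ B, A ∪ C ∈ B) ∧ (∀ A ∈ B, ∀ C ∈ B, A ∩ C ∈ B)

/-- A family `M ⊆ Δ` is compatible in `Δ` if it is contained in some Boolean
subalgebra of `Δ`. -/
def IsCompatible {α : Type*} (Δ M : Set (Set α)) : Prop :=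
  ∃ B, IsBoolSub Δ B ∧ M ⊆ B

/-- The Boolean subalgebra of subsets generated by a family `M` of subsets. -/
inductive BoolGen {α : Type*} (M : Set (Set α)) : Set α → Prop
  | base {A : Set α} : A ∈ M → BoolGen M A
  | univ : BoolGen M Set.univ
  | compl {A : Set α} : BoolGen M A → BoolGen M Aᶜ
  | union {A B : Set α} : BoolGen M A → BoolGen M B → BoolGen M (A ∪ B)
  | inter {A B : Set α} : BoolGen M A → BoolGen M B → BoolGen M (A ∩ B)

/-- For `S = {0,1}ⁿ` (`n ≥ 1`), `Δ` the even-cardinality subsets of `S`, and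
`A i = {x | x i = 1}`: every subfamily of `{A 1, …, A n}` with strictly fewer
than `n` members generates a Boolean subalgebra contained in `Δ`, and hence is
compatible in `Δ`. -/
theorem stmt2 (n : ℕ) (hn : 1 ≤ n)
    (Δ : Set (Set (Fin n → Bool))) (hΔ : Δ = {X : Set (Fin n → Bool) | Even X.ncard})
    (A : Fin n → Set (Fin n → Bool)) (hA : ∀ i, A i = {x : Fin n → Bool | x i = true}) :
    ∀ I : Finset (Fin n), I.card < n →
      (∀ X : Set (Fin n → Bool), BoolGen (A '' ↑I) X → X ∈ Δ) ∧
        IsCompatible Δ (A '' ↑I) := by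
  intro I hI
  -- pick a coordinate not in I
  obtain ⟨j, hj⟩ : ∃ j : Fin n, j ∉ I := by
    by_contra h
    push_neg at h
    have : I = Finset.univ := Finset.eq_univ_iff_forall.mpr h
    simp [this] at hI
  -- the coordinate-flip involution
  set f : (Fin n → Bool) → (Fin n → Bool) := fun x => Function.update x j (!x j) with hf
  have hff : Function.Involutive f := by
    intro x
    funext k
    by_cases hk : k = j
    · subst hk; simp [hf]
    · simp [hf, Function.update_of_ne hk]
  -- every generated set is invariant under f
  have hinv : ∀ X, BoolGen (A '' ↑I) X → ∀ x, x ∈ X ↔ f x ∈ X := by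
    intro X hX
    induction hX with
    | @base B hB =>
      obtain ⟨i, hi, rfl⟩ := hB
      intro x
      have hij : i ≠ j := fun h => hj (h ▸ hi)
      simp [hA i, hf, Function.update_of_ne hij]
    | univ => simp
    | compl h ih => intro x; simp [ih x]
    | union h1 h2 ih1 ih2 => intro x; simp [Set.mem_union, ih1 x, ih2 x]
    | inter h1 h2 ih1 ih2 => intro x; simp [Set.mem_inter_iff, ih1 x, ih2 x]
  have key : ∀ X, BoolGen (A '' ↑I) X → X ∈ Δ := by
    intro X hX
    rw [hΔ]
    have hXinv := hinv X hX
    set T : Set (Fin n → Bool) := {x | x j = true} with hT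
    have himg : f '' (X ∩ T) = X ∩ Tᶜ := by
      ext y
      constructor
      · rintro ⟨x, ⟨hx, hxT⟩, rfl⟩
        refine ⟨(hXinv x).1 hx, ?_⟩
        simp [hT, hf] at hxT ⊢
        simp [hxT]
      · rintro ⟨hy, hyT⟩
        refine ⟨f y, ⟨(hXinv y).1 hy, ?_⟩, hff y⟩
        simp [hT, hf] at hyT ⊢
        simp [hyT]
    have hsplit : X = (X ∩ T) ∪ (X ∩ Tᶜ) := by
      rw [← Set.inter_union_distrib_left, Set.union_compl_self, Set.inter_univ]
    have hdisj : Disjoint (X ∩ T) (X ∩ Tᶜ) :=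
      Disjoint.mono Set.inter_subset_right Set.inter_subset_right disjoint_compl_right
    have hcard : X.ncard = (X ∩ T).ncard + (X ∩ Tᶜ).ncard := by
      conv_lhs => rw [hsplit]
      exact Set.ncard_union_eq hdisj (Set.toFinite _) (Set.toFinite _)
    have heq : (X ∩ Tᶜ).ncard = (X ∩ T).ncard := by
      rw [← himg, Set.ncard_image_of_injective _ hff.injective]
    show Even X.ncard
    rw [hcard, heq]
    exact ⟨(X ∩ T).ncard, rfl⟩
  refine ⟨key, setOf (BoolGen (A '' ↑I)), ⟨key, BoolGen.univ, ?_, ?_, ?_⟩, ?_⟩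
  · intro B hB; exact hB.compl
  · intro B hB C hC; exact hB.union hC
  · intro B hB C hC; exact hB.inter hC
  · intro B hB; exact BoolGen.base hB
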